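/- Assume the KKT setup with dataset size m, that m·(p+1) ≤ (d+1)/3, that both labels occur (I^+ ≠ ∅ and I^− ≠ ∅), and that |I^+| ≥ c·m and |I^−| ≥ c·m for some c ∈ (0,1]. Set c' := m(p+1)/(d+1), η₁ := (p+1)/(d − m·p), η₂ := 2(c·c'+1)(d+1)/(m·c·(d − m·p)), and z := (η₁ + η₂) · Σ_{l=1}^m y_l x_l. Then for every i ∈ I^− we have N_θ(x_i + z) ≥ 1. -/

import Mathlib

open InnerProductSpace Finset

/-- A depth-2 ReLU network of width `k` with first-layer weights `w`, biases `b`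
and second-layer weights `v`. -/
noncomputable def net {d k : ℕ} (w : Fin k → EuclideanSpace ℝ (Fin d))
    (b v : Fin k → ℝ) (z : EuclideanSpace ℝ (Fin d)) : ℝ :=
  ∑ j, v j * max 0 (⟪w j, z⟫_ℝ + b j)

lemma mul_relu_of_pos {v t : ℝ} (hv : 0 < v) : v * max 0 (v * t) = v ^ 2 * max 0 t := by
  rcases le_or_gt t 0 with h | h
  · rw [max_eq_left (mul_nonpos_of_nonneg_of_nonpos hv.le h), max_eq_left h]; ring
  · rw [max_eq_right (mul_pos hv h).le, max_eq_right h.le]; ring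

/-- under the KKT conditions, if `m(p+1) ≤ (d+1)/3`, both labels
occur, and each label makes up a `c`-fraction of the data, then with
`c' := m(p+1)/(d+1)`, `η₁ := (p+1)/(d-mp)`, `η₂ := 2(cc'+1)(d+1)/(mc(d-mp))` and
`z := (η₁+η₂) ∑ₗ yₗ xₗ`, every negatively labeled example satisfies
`N_θ(xᵢ + z) ≥ 1`. -/
theorem kkt_perturbation_flips_negative (d m k : ℕ)
    (x : Fin m → EuclideanSpace ℝ (Fin d)) (y : Fin m → ℝ)
    (w : Fin k → EuclideanSpace ℝ (Fin d)) (b v : Fin k → ℝ)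
    (lam : Fin m → ℝ) (s : Fin m → Fin k → ℝ) (p : ℝ)
    (hy : ∀ i, y i = 1 ∨ y i = -1)
    (hx : ∀ i, ‖x i‖ = Real.sqrt d)
    (hp0 : 0 ≤ p)
    (hp : ∀ i j, i ≠ j → |⟪x i, x j⟫_ℝ| ≤ p)
    (hlam : ∀ i, 0 ≤ lam i)
    (hs01 : ∀ i j, s i j ∈ Set.Icc (0 : ℝ) 1)
    (hmargin : ∀ i, 1 ≤ y i * net w b v (x i))
    (hcomp : ∀ i, y i * net w b v (x i) ≠ 1 → lam i = 0)
    (hs1 : ∀ i j, 0 < ⟪w j, x i⟫_ℝ + b j → s i j = 1)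
    (hs0 : ∀ i j, ⟪w j, x i⟫_ℝ + b j < 0 → s i j = 0)
    (hw : ∀ j, w j = ∑ i, (lam i * y i * v j * s i j) • x i)
    (hb : ∀ j, b j = ∑ i, lam i * y i * v j * s i j)
    (hmp : (m : ℝ) * (p + 1) ≤ ((d : ℝ) + 1) / 3)
    (hIp : ∃ i, y i = 1) (hIm : ∃ i, y i = -1)
    (c : ℝ) (hc0 : 0 < c) (hc1 : c ≤ 1)
    (hcp : c * m ≤ ((Finset.univ.filter fun i => y i = 1).card : ℝ))
    (hcm : c * m ≤ ((Finset.univ.filter fun i => y i = -1).card : ℝ))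
    (η₁ η₂ : ℝ)
    (hη₁ : η₁ = (p + 1) / ((d : ℝ) - (m : ℝ) * p))
    (hη₂ : η₂ = 2 * (c * ((m : ℝ) * (p + 1) / ((d : ℝ) + 1)) + 1) * ((d : ℝ) + 1) /
      ((m : ℝ) * c * ((d : ℝ) - (m : ℝ) * p))) :
    ∀ i, y i = -1 → 1 ≤ net w b v (x i + (η₁ + η₂) • ∑ l, y l • x l) := by
  intro i hyi
  classical
  obtain ⟨i0, hi0⟩ := hIp
  have hm0 : 0 < m := i0.pos
  have hmR : (1 : ℝ) ≤ (m : ℝ) := by exact_mod_cast hm0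
  have hdR : (0 : ℝ) ≤ (d : ℝ) := Nat.cast_nonneg d
  have hD : (0 : ℝ) < (d : ℝ) - (m : ℝ) * p := by
    nlinarith [mul_nonneg (by linarith : (0:ℝ) ≤ (m:ℝ) - 1) hp0]
  have hcm0 : (0 : ℝ) < c * (m : ℝ) := mul_pos hc0 (by linarith)
  have hd1 : ((d : ℝ) + 1) ≠ 0 := by positivity
  set η : ℝ := η₁ + η₂ with hηdef
  set β : ℝ := 2 * ((d : ℝ) + 1) / (c * (m : ℝ)) with hβdef
  have hβ0 : (0 : ℝ) < β := div_pos (by positivity) hcm0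
  have hcmβ : c * (m : ℝ) * β = 2 * ((d : ℝ) + 1) := by
    rw [hβdef]; field_simp
  have hηD : η * ((d : ℝ) - (m : ℝ) * p) = 3 * (p + 1) + β := by
    rw [hηdef, hη₁, hη₂, hβdef]
    have hDne : (d : ℝ) - (m : ℝ) * p ≠ 0 := hD.ne'
    have hc0ne : c ≠ 0 := hc0.ne'
    have hmne : (m : ℝ) ≠ 0 := by positivity
    rw [add_mul, div_mul_cancel₀ _ hDne, ← div_div, div_mul_cancel₀ _ hDne]
    field_simp
    ring
  have hη0 : 0 ≤ η := by nlinarith [hηD, hD, hβ0, hp0]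
  set Ip : Finset (Fin m) := Finset.univ.filter (fun l => y l = 1) with hIpdef
  set T : Fin m → Fin k → ℝ :=
    fun r j => ∑ l, lam l * y l * s l j * (⟪x l, x r⟫_ℝ + 1) with hTdef
  set L : Fin k → ℝ := fun j => ∑ l, lam l * s l j with hLdef
  set Lp : Fin k → ℝ := fun j => ∑ l ∈ Ip, lam l * s l j with hLpdef
  set S : Fin k → ℝ :=
    fun j => ∑ l, lam l * s l j * (y l * ∑ t, y t * ⟪x l, x t⟫_ℝ) with hSdef
  have hs0' : ∀ l j, 0 ≤ s l j := fun l j => (hs01 l j).1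
  have hls : ∀ l j, 0 ≤ lam l * s l j := fun l j => mul_nonneg (hlam l) (hs0' l j)
  have hL0 : ∀ j, 0 ≤ L j := fun j => Finset.sum_nonneg fun l _ => hls l j
  have hLp0 : ∀ j, 0 ≤ Lp j := fun j => Finset.sum_nonneg fun l _ => hls l j
  have hLpL : ∀ j, Lp j ≤ L j := fun j =>
    Finset.sum_le_sum_of_subset_of_nonneg (Finset.filter_subset _ _)
      (fun l _ _ => hls l j)
  have hyabs : ∀ l, |y l| = 1 := fun l => by
    rcases hy l with h | h <;> rw [h] <;> norm_num
  have hxx : ∀ l, ⟪x l, x l⟫_ℝ = (d : ℝ) := fun l => by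
    rw [real_inner_self_eq_norm_sq, hx l, Real.sq_sqrt hdR]
  -- pre-activation formula
  have hkey : ∀ (j : Fin k) (u : EuclideanSpace ℝ (Fin d)),
      ⟪w j, u⟫_ℝ + b j = v j * ∑ l, lam l * y l * s l j * (⟪x l, u⟫_ℝ + 1) := by
    intro j u
    rw [hw j, hb j, sum_inner, ← Finset.sum_add_distrib, Finset.mul_sum]
    refine Finset.sum_congr rfl fun l _ => ?_
    rw [real_inner_smul_left]; ring
  have hnet : ∀ r, net w b v (x r) = ∑ j, v j * max 0 (v j * T r j) := by
    intro r
    unfold net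
    refine Finset.sum_congr rfl fun j _ => ?_
    rw [hkey j (x r), hTdef]
  -- perturbed pre-activation
  have hpert : net w b v (x i + η • ∑ t, y t • x t)
      = ∑ j, v j * max 0 (v j * (T i j + η * S j)) := by
    unfold net
    refine Finset.sum_congr rfl fun j _ => ?_
    rw [hkey j]
    have heq : (∑ l, lam l * y l * s l j * (⟪x l, x i + η • ∑ t, y t • x t⟫_ℝ + 1))
        = T i j + η * S j := by
      simp only [hTdef, hSdef]
      rw [Finset.mul_sum, ← Finset.sum_add_distrib]
      refine Finset.sum_congr rfl fun l _ => ?_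
      rw [inner_add_right, real_inner_smul_right, inner_sum]
      simp only [real_inner_smul_right]
      ring
    rw [heq]
  -- bound on T minus its diagonal term
  have hTbound : ∀ r j,
      |T r j - lam r * y r * s r j * ((d : ℝ) + 1)| ≤ (p + 1) * L j := by
    intro r j
    have hsplit : T r j = lam r * y r * s r j * ((d : ℝ) + 1)
        + ∑ l ∈ Finset.univ.erase r, lam l * y l * s l j * (⟪x l, x r⟫_ℝ + 1) := by
      simp only [hTdef]
      rw [← Finset.add_sum_erase _ _ (Finset.mem_univ r), hxx r]
    rw [hsplit, add_sub_cancel_left]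
    calc |∑ l ∈ Finset.univ.erase r, lam l * y l * s l j * (⟪x l, x r⟫_ℝ + 1)|
        ≤ ∑ l ∈ Finset.univ.erase r, |lam l * y l * s l j * (⟪x l, x r⟫_ℝ + 1)| :=
          Finset.abs_sum_le_sum_abs _ _
      _ ≤ ∑ l ∈ Finset.univ.erase r, lam l * s l j * (p + 1) := by
          refine Finset.sum_le_sum fun l hl => ?_
          have hne : l ≠ r := (Finset.mem_erase.mp hl).1
          have hA : |⟪x l, x r⟫_ℝ + 1| ≤ p + 1 := by
            have := hp l r hne
            calc |⟪x l, x r⟫_ℝ + 1| ≤ |⟪x l, x r⟫_ℝ| + 1 := by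
                  have := abs_add_le (⟪x l, x r⟫_ℝ) 1; simpa using this
              _ ≤ p + 1 := by linarith
          have h1 : |lam l * y l * s l j| = lam l * s l j := by
            rw [abs_mul, abs_mul, hyabs l, abs_of_nonneg (hlam l),
              abs_of_nonneg (hs0' l j)]; ring
          rw [abs_mul, h1]
          exact mul_le_mul_of_nonneg_left hA (hls l j)
      _ ≤ ∑ l, lam l * s l j * (p + 1) := by
          refine Finset.sum_le_sum_of_subset_of_nonneg (Finset.subset_univ _)
            (fun l _ _ => ?_)
          exact mul_nonneg (hls l j) (by linarith)
      _ = (p + 1) * L j := by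
          simp only [hLdef]; rw [Finset.mul_sum]
          exact Finset.sum_congr rfl fun l _ => by ring
  -- lower bound on the correlation terms
  have hDl : ∀ l, (d : ℝ) - (m : ℝ) * p ≤ y l * ∑ t, y t * ⟪x l, x t⟫_ℝ := by
    intro l
    have hexp : y l * ∑ t, y t * ⟪x l, x t⟫_ℝ
        = (d : ℝ) + ∑ t ∈ Finset.univ.erase l, y l * (y t * ⟪x l, x t⟫_ℝ) := by
      rw [Finset.mul_sum, ← Finset.add_sum_erase _ _ (Finset.mem_univ l), hxx l]
      have hyl : y l * (y l * (d : ℝ)) = (d : ℝ) := by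
        rcases hy l with h | h <;> rw [h] <;> ring
      rw [hyl]
    have hterm : ∀ t ∈ Finset.univ.erase l, -p ≤ y l * (y t * ⟪x l, x t⟫_ℝ) := by
      intro t ht
      have hne : t ≠ l := (Finset.mem_erase.mp ht).1
      have habs : |y l * (y t * ⟪x l, x t⟫_ℝ)| ≤ p := by
        rw [abs_mul, abs_mul, hyabs l, hyabs t, one_mul, one_mul]
        exact hp l t hne.symm
      linarith only [neg_abs_le (y l * (y t * ⟪x l, x t⟫_ℝ)), habs]
    have hsum : -((m : ℝ) * p) ≤ ∑ t ∈ Finset.univ.erase l, y l * (y t * ⟪x l, x t⟫_ℝ) := by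
      have h1 : ∑ t ∈ Finset.univ.erase l, (-p)
          ≤ ∑ t ∈ Finset.univ.erase l, y l * (y t * ⟪x l, x t⟫_ℝ) :=
        Finset.sum_le_sum hterm
      have h2 : ∑ t ∈ Finset.univ.erase l, (-p)
          = -(((Finset.univ.erase l).card : ℝ) * p) := by
        rw [Finset.sum_const, nsmul_eq_mul]; ring
      have h3 : ((Finset.univ.erase l).card : ℝ) ≤ (m : ℝ) := by
        have : (Finset.univ.erase l).card ≤ m := by
          rw [Finset.card_erase_of_mem (Finset.mem_univ l), Finset.card_univ,
            Fintype.card_fin]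
          omega
        exact_mod_cast this
      have h4 : ((Finset.univ.erase l).card : ℝ) * p ≤ (m : ℝ) * p :=
        mul_le_mul_of_nonneg_right h3 hp0
      linarith only [h1, h2, h4]
    linarith only [hexp, hsum]
  have hS : ∀ j, ((d : ℝ) - (m : ℝ) * p) * L j ≤ S j := by
    intro j
    simp only [hSdef, hLdef]
    rw [Finset.mul_sum]
    refine Finset.sum_le_sum fun l _ => ?_
    calc ((d : ℝ) - (m : ℝ) * p) * (lam l * s l j)
        = lam l * s l j * ((d : ℝ) - (m : ℝ) * p) := by ring
      _ ≤ lam l * s l j * (y l * ∑ t, y t * ⟪x l, x t⟫_ℝ) :=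
          mul_le_mul_of_nonneg_left (hDl l) (hls l j)
  have hS0 : ∀ j, 0 ≤ S j := fun j =>
    le_trans (mul_nonneg hD.le (hL0 j)) (hS j)
  have hEta : ∀ j, (3 * (p + 1) + β) * L j ≤ η * S j := by
    intro j
    have h1 : η * (((d : ℝ) - (m : ℝ) * p) * L j) ≤ η * S j :=
      mul_le_mul_of_nonneg_left (hS j) hη0
    calc (3 * (p + 1) + β) * L j = η * ((d : ℝ) - (m : ℝ) * p) * L j := by
          rw [hηD]
      _ = η * (((d : ℝ) - (m : ℝ) * p) * L j) := by ring
      _ ≤ η * S j := h1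
  -- the margin lemma : ∑ K ≥ 2
  set K : Fin k → ℝ :=
    fun j => if 0 < v j then v j ^ 2 * (2 * (p + 1) * L j + β * Lp j) else 0 with hKdef
  have hIppos : (0 : ℝ) < (Ip.card : ℝ) := lt_of_lt_of_le hcm0 hcp
  have hK2 : 2 ≤ ∑ j, K j := by
    have hstep : ∀ r ∈ Ip, (1 : ℝ) ≤ ∑ j, (if 0 < v j then
        v j ^ 2 * (((d : ℝ) + 1) * (lam r * s r j) + (p + 1) * L j) else 0) := by
      intro r hr
      have hyr : y r = 1 := by
        simpa [hIpdef] using (Finset.mem_filter.mp hr).2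
      have h1 : (1 : ℝ) ≤ net w b v (x r) := by
        have h' := hmargin r; rw [hyr] at h'; linarith only [h']
      rw [hnet r] at h1
      refine le_trans h1 (Finset.sum_le_sum fun j _ => ?_)
      by_cases hv : 0 < v j
      · rw [if_pos hv]
        have hTle : T r j ≤ ((d : ℝ) + 1) * (lam r * s r j) + (p + 1) * L j := by
          have h := (abs_le.mp (hTbound r j)).2
          rw [hyr] at h
          linarith only [h]
        have hub0 : 0 ≤ ((d : ℝ) + 1) * (lam r * s r j) + (p + 1) * L j :=
          add_nonneg (mul_nonneg (by linarith only [hdR]) (hls r j))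
            (mul_nonneg (by linarith only [hp0]) (hL0 j))
        have hmax : max 0 (v j * T r j)
            ≤ v j * (((d : ℝ) + 1) * (lam r * s r j) + (p + 1) * L j) :=
          max_le (mul_nonneg hv.le hub0) (mul_le_mul_of_nonneg_left hTle hv.le)
        calc v j * max 0 (v j * T r j)
            ≤ v j * (v j * (((d : ℝ) + 1) * (lam r * s r j) + (p + 1) * L j)) :=
              mul_le_mul_of_nonneg_left hmax hv.le
          _ = v j ^ 2 * (((d : ℝ) + 1) * (lam r * s r j) + (p + 1) * L j) := by ring
      · rw [if_neg hv]
        exact mul_nonpos_of_nonpos_of_nonneg (not_lt.mp hv) (le_max_left 0 _)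
    have hsum : (Ip.card : ℝ) ≤ ∑ j, (if 0 < v j then
        v j ^ 2 * (((d : ℝ) + 1) * Lp j + (p + 1) * (Ip.card : ℝ) * L j) else 0) := by
      have h := Finset.sum_le_sum hstep
      rw [Finset.sum_const, nsmul_eq_mul, mul_one, Finset.sum_comm] at h
      refine le_trans h (le_of_eq (Finset.sum_congr rfl fun j _ => ?_))
      by_cases hv : 0 < v j
      · simp only [if_pos hv]
        have e1 : ∑ r ∈ Ip, v j ^ 2 * (((d : ℝ) + 1) * (lam r * s r j) + (p + 1) * L j)
            = ∑ r ∈ Ip, (v j ^ 2 * ((d : ℝ) + 1)) * (lam r * s r j)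
              + ∑ r ∈ Ip, v j ^ 2 * ((p + 1) * L j) := by
          rw [← Finset.sum_add_distrib]
          exact Finset.sum_congr rfl fun r _ => by ring
        rw [e1, ← Finset.mul_sum, Finset.sum_const, nsmul_eq_mul]
        simp only [hLpdef]
        ring
      · simp only [if_neg hv, Finset.sum_const_zero]
    have hper : ∀ j, 2 * (if 0 < v j then
        v j ^ 2 * (((d : ℝ) + 1) * Lp j + (p + 1) * (Ip.card : ℝ) * L j) else 0)
        ≤ (Ip.card : ℝ) * K j := by
      intro j
      by_cases hv : 0 < v j
      · simp only [hKdef, if_pos hv]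
        have hq : 2 * ((d : ℝ) + 1) ≤ (Ip.card : ℝ) * β := by
          have h := mul_le_mul_of_nonneg_right hcp hβ0.le
          rw [hcmβ] at h
          linarith only [h]
        have key : 0 ≤ v j ^ 2 * Lp j * ((Ip.card : ℝ) * β - 2 * ((d : ℝ) + 1)) :=
          mul_nonneg (mul_nonneg (sq_nonneg _) (hLp0 j)) (by linarith only [hq])
        linarith only [key]
      · simp only [hKdef, if_neg hv, mul_zero]
        norm_num
    have h2 : (Ip.card : ℝ) * 2 ≤ (Ip.card : ℝ) * ∑ j, K j := by
      calc (Ip.card : ℝ) * 2 = 2 * (Ip.card : ℝ) := by ring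
        _ ≤ 2 * ∑ j, (if 0 < v j then
            v j ^ 2 * (((d : ℝ) + 1) * Lp j + (p + 1) * (Ip.card : ℝ) * L j) else 0) := by
            linarith only [hsum]
        _ = ∑ j, 2 * (if 0 < v j then
            v j ^ 2 * (((d : ℝ) + 1) * Lp j + (p + 1) * (Ip.card : ℝ) * L j) else 0) := by
            rw [Finset.mul_sum]
        _ ≤ ∑ j, (Ip.card : ℝ) * K j := Finset.sum_le_sum fun j _ => hper j
        _ = (Ip.card : ℝ) * ∑ j, K j := by rw [Finset.mul_sum]
    exact le_of_mul_le_mul_left h2 hIppos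
  -- main argument
  rw [hpert]
  by_cases hli : lam i = 0
  · -- easy case : the bad example is not a support vector
    have hperj : ∀ j, K j ≤ v j * max 0 (v j * (T i j + η * S j)) := by
      intro j
      have hTlb : -((p + 1) * L j) ≤ T i j := by
        have h := (abs_le.mp (hTbound i j)).1
        rw [hli] at h
        linarith only [h]
      have hsum : (2 * (p + 1) + β) * L j ≤ T i j + η * S j := by
        linarith only [hEta j, hTlb]
      have h0 : 0 ≤ T i j + η * S j := by
        have hnn : 0 ≤ (2 * (p + 1) + β) * L j :=
          mul_nonneg (by linarith only [hp0, hβ0]) (hL0 j)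
        linarith only [hsum, hnn]
      by_cases hv : 0 < v j
      · simp only [hKdef, if_pos hv]
        have hc1' : 2 * (p + 1) * L j + β * Lp j ≤ T i j + η * S j := by
          linarith only [hsum, mul_le_mul_of_nonneg_left (hLpL j) hβ0.le]
        calc v j ^ 2 * (2 * (p + 1) * L j + β * Lp j)
            ≤ v j ^ 2 * (T i j + η * S j) :=
              mul_le_mul_of_nonneg_left hc1' (sq_nonneg _)
          _ = v j * (v j * (T i j + η * S j)) := by ring
          _ ≤ v j * max 0 (v j * (T i j + η * S j)) :=
              mul_le_mul_of_nonneg_left (le_max_right _ _) hv.le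
      · simp only [hKdef, if_neg hv]
        have hx0 : v j * (T i j + η * S j) ≤ 0 :=
          mul_nonpos_of_nonpos_of_nonneg (not_lt.mp hv) h0
        rw [max_eq_left hx0, mul_zero]
    calc (1 : ℝ) ≤ 2 := one_le_two
      _ ≤ ∑ j, K j := hK2
      _ ≤ ∑ j, v j * max 0 (v j * (T i j + η * S j)) := Finset.sum_le_sum fun j _ => hperj j
  · -- hard case : complementary slackness gives net (x i) = -1
    have hNi : net w b v (x i) = -1 := by
      have h : y i * net w b v (x i) = 1 := by
        by_contra hne; exact hli (hcomp i hne)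
      rw [hyi] at h; linarith
    have hperj : ∀ j, v j * max 0 (v j * T i j) + K j
        ≤ v j * max 0 (v j * (T i j + η * S j)) := by
      intro j
      rcases lt_trichotomy (v j) 0 with hv | hv | hv
      · have hηS : 0 ≤ η * S j := mul_nonneg hη0 (hS0 j)
        have h1 : v j * (T i j + η * S j) ≤ v j * T i j := by
          linarith only [mul_nonpos_of_nonpos_of_nonneg hv.le hηS]
        have h2 : max 0 (v j * (T i j + η * S j)) ≤ max 0 (v j * T i j) :=
          max_le_max le_rfl h1
        have hK0 : K j = 0 := by
          simp only [hKdef, if_neg (not_lt.mpr hv.le)]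
        rw [hK0, add_zero]
        exact mul_le_mul_of_nonpos_left h2 hv.le
      · simp only [hKdef, hv]
        norm_num
      · -- v j > 0
        have hTmin : max 0 (T i j) ≤ T i j + (p + 1) * L j := by
          by_cases hsij : s i j = 0
          · have h := (abs_le.mp (hTbound i j)).1
            rw [hsij] at h
            have hT : -((p + 1) * L j) ≤ T i j := by linarith only [h]
            have hnn : 0 ≤ (p + 1) * L j := mul_nonneg (by linarith only [hp0]) (hL0 j)
            exact max_le (by linarith only [hT, hnn]) (by linarith only [hnn])
          · have hwx : 0 ≤ ⟪w j, x i⟫_ℝ + b j := by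
              by_contra h; push_neg at h; exact hsij (hs0 i j h)
            rw [hkey j (x i)] at hwx
            have hwx' : 0 ≤ v j * T i j := by rw [hTdef]; exact hwx
            have hT0 : 0 ≤ T i j := (mul_le_mul_iff_right₀ hv).mp (by linarith only [hwx'])
            rw [max_eq_right hT0]
            have hnn : 0 ≤ (p + 1) * L j := mul_nonneg (by linarith only [hp0]) (hL0 j)
            linarith only [hnn]
        have hident : v j * max 0 (v j * T i j) = v j ^ 2 * max 0 (T i j) :=
          mul_relu_of_pos hv
        have hKj : K j = v j ^ 2 * (2 * (p + 1) * L j + β * Lp j) := by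
          simp only [hKdef, if_pos hv]
        rw [hident, hKj]
        have hA : v j ^ 2 * max 0 (T i j) ≤ v j ^ 2 * (T i j + (p + 1) * L j) :=
          mul_le_mul_of_nonneg_left hTmin (sq_nonneg _)
        have hB : v j ^ 2 * ((3 * (p + 1) + β) * L j) ≤ v j ^ 2 * (η * S j) :=
          mul_le_mul_of_nonneg_left (hEta j) (sq_nonneg _)
        have hC : v j ^ 2 * (β * Lp j) ≤ v j ^ 2 * (β * L j) :=
          mul_le_mul_of_nonneg_left
            (mul_le_mul_of_nonneg_left (hLpL j) hβ0.le) (sq_nonneg _)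
        have hR : v j * (v j * (T i j + η * S j))
            ≤ v j * max 0 (v j * (T i j + η * S j)) :=
          mul_le_mul_of_nonneg_left (le_max_right _ _) hv.le
        linarith only [hA, hB, hC, hR]
    have hfinal : net w b v (x i) + ∑ j, K j
        ≤ ∑ j, v j * max 0 (v j * (T i j + η * S j)) := by
      rw [hnet i, ← Finset.sum_add_distrib]
      exact Finset.sum_le_sum fun j _ => hperj j
    rw [hNi] at hfinal
    linarith only [hK2, hfinal]
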